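/- In the scheduling game with 5 jobs N = {a,b,c,d,e} of weights w_a=5, w_b=4, w_c=4.5, w_d=9.25, w_e=2, and 3 machines with delays c_1=1, c_2=c_3=2, priority lists π_1=(a,b,c,d,e) and π_2=π_3=(e,d,b,c,a), there exists no pure Nash equilibrium. -/

import Mathlib

/-- Cost of job `i` in scheduling game with weights `w`, machine delays `c`,
priority lists `π` (per machine), at profile `s`. -/
def schedCost {n m : ℕ} (w : Fin n → ℝ) (c : Fin m → ℝ) (π : Fin m → Fin n → Fin n)
    (s : Fin n → Fin m) (i : Fin n) : ℝ :=
  c (s i) * ∑ i' ∈ Finset.univ.filter (fun i' => s i' = s i ∧ π (s i) i' ≤ π (s i) i), w i'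

/-- Pure Nash equilibrium: no job can strictly decrease its cost by switching machine. -/
def schedNE {n m : ℕ} (w : Fin n → ℝ) (c : Fin m → ℝ) (π : Fin m → Fin n → Fin n)
    (s : Fin n → Fin m) : Prop :=
  ∀ i j, schedCost w c π s i ≤ schedCost w c π (Function.update s i j) i

/-- Integer version of the cost (weights multiplied by 4). -/
def qCost (s : Fin 5 → Fin 3) (i : Fin 5) : ℤ :=
  (![1, 2, 2] : Fin 3 → ℤ) (s i) *
    ∑ i' ∈ Finset.univ.filter (fun i' =>
        s i' = s i ∧ (![![0,1,2,3,4], ![4,2,3,1,0], ![4,2,3,1,0]] : Fin 3 → Fin 5 → Fin 5) (s i) i'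
          ≤ (![![0,1,2,3,4], ![4,2,3,1,0], ![4,2,3,1,0]] : Fin 3 → Fin 5 → Fin 5) (s i) i),
      (![20, 16, 18, 37, 8] : Fin 5 → ℤ) i'

lemma cost_eq (s : Fin 5 → Fin 3) (i : Fin 5) :
    schedCost (![5, 4, 4.5, 9.25, 2]) (![1, 2, 2])
        (![![0,1,2,3,4], ![4,2,3,1,0], ![4,2,3,1,0]]) s i = (qCost s i : ℝ) / 4 := by
  unfold schedCost qCost
  push_cast
  rw [mul_div_assoc, Finset.sum_div]
  have tri : ∀ j : Fin 3, j = 0 ∨ j = 1 ∨ j = 2 := by decide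
  have hc : (![1, 2, 2] : Fin 3 → ℝ) (s i) = ((![1, 2, 2] : Fin 3 → ℤ) (s i) : ℝ) := by
    rcases tri (s i) with h | h | h <;> rw [h] <;> norm_num [Matrix.cons_val_two]
  rw [hc]
  congr 1
  exact Finset.sum_congr rfl (fun x _ => by fin_cases x <;> norm_num)

set_option maxRecDepth 100000 in
lemma key : ∀ s : Fin 5 → Fin 3, ∃ i j,
    qCost (Function.update s i j) i < qCost s i := by decide

/-- The 5-job, 3-machine game (jobs a,b,c,d,e = 0,1,2,3,4) has no pure Nash equilibrium. -/
theorem stmt0 :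
    ¬ ∃ s : Fin 5 → Fin 3,
      schedNE (![5, 4, 4.5, 9.25, 2]) (![1, 2, 2])
        (![![0,1,2,3,4], ![4,2,3,1,0], ![4,2,3,1,0]]) s := by
  rintro ⟨s, h⟩
  obtain ⟨i, j, hij⟩ := key s
  have := h i j
  rw [cost_eq, cost_eq] at this
  have : (qCost s i : ℝ) ≤ (qCost (Function.update s i j) i : ℝ) := by linarith
  exact absurd (by exact_mod_cast this) (not_le.mpr hij)
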